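/- arXiv:1905.09656 — 2 statements merged into one kernel-verified Lean document; each statement's English description precedes it below -/
import Mathlib

section
/- Fix integers t ≥ 1, i ≥ 1, q ≥ 0. Then ∑_{j=0}^{q} ((2q-j)!/(2^(q-j) · j! · (q-j)!)) · 2^q · (2t+2i+j-1)!/(2t+2i+2q-1)! · (t+i+q-1)!/(t+i-1)! = 1. -/
open Nat Finset

noncomputable def ff (b q j : ℕ) : ℝ :=
  ((2 * q - j)! : ℝ) / (2 ^ (q - j) * (j ! : ℝ) * ((q - j)! : ℝ)) *
    2 ^ q * ((2 * b + 1 + j)! : ℝ) / ((2 * b + 1 + 2 * q)! : ℝ) *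
    ((b + q)! : ℝ) / ((b)! : ℝ)

lemma fact_ne (n : ℕ) : ((n ! : ℕ) : ℝ) ≠ 0 :=
  Nat.cast_ne_zero.mpr (Nat.factorial_ne_zero n)

lemma R1 (b q j : ℕ) (h : j ≤ q) :
    (2 * ((q : ℝ) + 1 - j) * (2 * b + 2 * q + 3)) * ff b (q + 1) j
      = ((2 * (q : ℝ) + 2 - j) * (2 * (q : ℝ) + 1 - j)) * ff b q j := by
  obtain ⟨k, rfl⟩ : ∃ k, q = j + k := ⟨q - j, by omega⟩
  simp only [ff]
  rw [show 2 * (j + k + 1) - j = 2 * k + j + 1 + 1 by omega,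
    show (j + k + 1) - j = k + 1 by omega,
    show 2 * (j + k) - j = 2 * k + j by omega,
    show (j + k) - j = k by omega,
    show 2 * b + 1 + 2 * (j + k + 1) = 2 * b + 1 + 2 * (j + k) + 1 + 1 by omega,
    show b + (j + k + 1) = b + (j + k) + 1 by omega,
    Nat.factorial_succ (2 * k + j + 1), Nat.factorial_succ (2 * k + j),
    Nat.factorial_succ (k), Nat.factorial_succ (2 * b + 1 + 2 * (j + k) + 1),
    Nat.factorial_succ (2 * b + 1 + 2 * (j + k)), Nat.factorial_succ (b + (j + k))]
  have h1 := fact_ne j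
  have h2 := fact_ne k
  have h3 := fact_ne (2 * k + j)
  have h4 := fact_ne (2 * b + 1 + 2 * (j + k))
  have h5 := fact_ne (b + (j + k))
  have h6 := fact_ne b
  have h7 : (2 : ℝ) ^ (k + 1) ≠ 0 := pow_ne_zero _ two_ne_zero
  have h8 : (2 : ℝ) ^ k ≠ 0 := pow_ne_zero _ two_ne_zero
  push_cast
  field_simp
  ring

lemma R2 (b Q j : ℕ) (h : j < Q) :
    ((j : ℝ) + 1) * (2 * (Q : ℝ) - j) * ff b Q (j + 1)
      = 2 * ((Q : ℝ) - j) * (2 * (b : ℝ) + 2 + j) * ff b Q j := by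
  obtain ⟨k, rfl⟩ : ∃ k, Q = j + 1 + k := ⟨Q - j - 1, by omega⟩
  simp only [ff]
  rw [show 2 * (j + 1 + k) - (j + 1) = 2 * k + j + 1 by omega,
    show (j + 1 + k) - (j + 1) = k by omega,
    show 2 * (j + 1 + k) - j = 2 * k + j + 1 + 1 by omega,
    show (j + 1 + k) - j = k + 1 by omega,
    show 2 * b + 1 + (j + 1) = 2 * b + 1 + j + 1 by omega,
    Nat.factorial_succ (2 * k + j + 1), Nat.factorial_succ (2 * k + j),
    Nat.factorial_succ (k), Nat.factorial_succ (2 * b + 1 + j),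
    Nat.factorial_succ j]
  have h1 := fact_ne j
  have h2 := fact_ne k
  have h3 := fact_ne (2 * k + j)
  have h4 := fact_ne (2 * b + 1 + j)
  have h5 := fact_ne (2 * b + 1 + 2 * (j + 1 + k))
  have h6 := fact_ne (b + (j + 1 + k))
  have h7 := fact_ne b
  have h8 : (2 : ℝ) ^ (k + 1) ≠ 0 := pow_ne_zero _ two_ne_zero
  have h9 : (2 : ℝ) ^ k ≠ 0 := pow_ne_zero _ two_ne_zero
  push_cast
  field_simp
  ring

lemma key (b q j : ℕ) (hj : j ≤ q) :
    ff b (q + 1) j - ff b q j =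
      (-((j : ℝ) + 1) / (2 * (q : ℝ) + 2 - ((j : ℝ) + 1)) * ff b (q + 1) (j + 1))
        - (-(j : ℝ) / (2 * (q : ℝ) + 2 - (j : ℝ)) * ff b (q + 1) j) := by
  have hjq : (j : ℝ) ≤ q := by exact_mod_cast hj
  have hD1 : 2 * (q : ℝ) + 2 - ((j : ℝ) + 1) ≠ 0 := by nlinarith
  have hD2 : 2 * (q : ℝ) + 2 - (j : ℝ) ≠ 0 := by nlinarith
  have h1 := R1 b q j hj
  have h2 := R2 b (q + 1) j (by omega)
  push_cast at h2
  have hD1' : 2 * ((q : ℝ) + 1) - ((j : ℝ) + 1) ≠ 0 := by nlinarith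
  have hD2' : 2 * ((q : ℝ) + 1) - (j : ℝ) ≠ 0 := by nlinarith
  field_simp
  nlinarith [h1, h2, sq_nonneg ((q:ℝ) - j)]

lemma main_sum (b q : ℕ) : ∑ j ∈ Finset.range (q + 1), ff b q j = 1 := by
  induction q with
  | zero =>
      simp [ff, div_self (fact_ne (2 * b + 1)), div_self (fact_ne b)]
  | succ q ih =>
      set g : ℕ → ℝ := fun n => -(n : ℝ) / (2 * (q : ℝ) + 2 - (n : ℝ)) * ff b (q + 1) n with hg
      have htel : ∑ j ∈ Finset.range (q + 1), (ff b (q + 1) j - ff b q j)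
          = g (q + 1) - g 0 := by
        rw [← Finset.sum_range_sub g]
        refine Finset.sum_congr rfl fun j hj => ?_
        have : j ≤ q := by simpa using Nat.lt_succ_iff.mp (Finset.mem_range.mp hj)
        rw [key b q j this]
        simp only [hg]
        push_cast
        ring_nf
      have hg0 : g 0 = 0 := by simp [hg]
      have hgq : g (q + 1) = -ff b (q + 1) (q + 1) := by
        have hd : 2 * (q : ℝ) + 2 - ((q : ℝ) + 1) = (q : ℝ) + 1 := by ring
        have hne : (q : ℝ) + 1 ≠ 0 := by positivity
        simp only [hg]
        push_cast
        rw [hd, neg_div, div_self hne]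
        ring
      have hsplit : ∑ j ∈ Finset.range (q + 1), ff b (q + 1) j
          = ∑ j ∈ Finset.range (q + 1), ff b q j
            + ∑ j ∈ Finset.range (q + 1), (ff b (q + 1) j - ff b q j) := by
        rw [← Finset.sum_add_distrib]
        refine Finset.sum_congr rfl fun j _ => by ring
      rw [Finset.sum_range_succ, hsplit, htel, hg0, hgq, ih]
      ring

/-- The closed form for `P(Ỹ_{i,q} = j)` is a probability distribution: it sums
to `1` over `j = 0, …, q`. Here `t = t_{k-1}`. -/
theorem mergeInsertion_Ytilde_sums_to_one (t i q : ℕ) (ht : 1 ≤ t) (hi : 1 ≤ i) :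
    ∑ j ∈ Finset.range (q + 1),
        ((2 * q - j)! : ℝ) / (2 ^ (q - j) * (j ! : ℝ) * ((q - j)! : ℝ)) *
          2 ^ q * ((2 * t + 2 * i + j - 1)! : ℝ) / ((2 * t + 2 * i + 2 * q - 1)! : ℝ) *
          ((t + i + q - 1)! : ℝ) / ((t + i - 1)! : ℝ) = 1 := by
  have : ∑ j ∈ Finset.range (q + 1),
      ((2 * q - j)! : ℝ) / (2 ^ (q - j) * (j ! : ℝ) * ((q - j)! : ℝ)) *
        2 ^ q * ((2 * t + 2 * i + j - 1)! : ℝ) / ((2 * t + 2 * i + 2 * q - 1)! : ℝ) *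
        ((t + i + q - 1)! : ℝ) / ((t + i - 1)! : ℝ)
      = ∑ j ∈ Finset.range (q + 1), ff (t + i - 1) q j := by
    refine Finset.sum_congr rfl fun j _ => ?_
    simp only [ff]
    rw [show 2 * t + 2 * i + j - 1 = 2 * (t + i - 1) + 1 + j by omega,
      show 2 * t + 2 * i + 2 * q - 1 = 2 * (t + i - 1) + 1 + 2 * q by omega,
      show t + i + q - 1 = (t + i - 1) + q by omega]
  rw [this, main_sum]
end

section
/- Fix integers k ≥ 2 and set t_k = (2^(k+1)+(-1)^k)/3, t_{k-1} = (2^k+(-1)^(k-1))/3. For 1 ≤ i ≤ t_k - t_{k-1} and 2t_{k-1}+i-1 ≤ j ≤ 2^k - 1, define P(Y_i = j) = 2^(j - 2t_{k-1} - i + 1) · (2t_k - i - j - 1)! / ((j - 2t_{k-1} - i + 1)! · (2^k - j - 1)!) · (i+j)!/(2t_k - 1)! · (t_k - 1)!/(t_{k-1}+i-1)!. Then ∑_{j=2t_{k-1}+i-1}^{2^k-1} P(Y_i = j) = 1. -/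
open Nat Finset

noncomputable def Tterm (m p d : ℕ) : ℝ :=
  2 ^ m * ((m + 2 * p)! : ℝ) * ((2 * d + 1 + m)! : ℝ) / ((m ! : ℝ) * (p ! : ℝ))

noncomputable def Ssum (N d : ℕ) : ℝ := ∑ m ∈ Finset.range (N + 1), Tterm m (N - m) d

lemma fact_cast_succ (n : ℕ) : ((n + 1)! : ℝ) = ((n : ℝ) + 1) * (n ! : ℝ) := by
  rw [Nat.factorial_succ]; push_cast; ring

lemma step_lemma (m s d : ℕ) :
    Tterm m (s + 1) d - Tterm m s (d + 1) / ((d : ℝ) + 1)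
      = ((m : ℝ) + 1) * ((s : ℝ) - (d : ℝ) - 1) * 2 ^ (m + 1) * ((m + 2 * s)! : ℝ)
          * ((2 * d + 2 + m)! : ℝ) / (((d : ℝ) + 1) * (((m + 1)!) : ℝ) * ((s !) : ℝ))
        - (m : ℝ) * ((s : ℝ) - (d : ℝ)) * 2 ^ m * ((m + 2 * s + 1)! : ℝ)
          * ((2 * d + 1 + m)! : ℝ) / (((d : ℝ) + 1) * ((m !) : ℝ) * (((s + 1)!) : ℝ)) := by
  unfold Tterm
  have e1 : m + 2 * (s + 1) = (m + 2 * s + 1) + 1 := by ring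
  have e2 : 2 * (d + 1) + 1 + m = (2 * d + 2 + m) + 1 := by ring
  have e3 : 2 * d + 2 + m = (2 * d + 1 + m) + 1 := by ring
  rw [e1, e2, fact_cast_succ (m + 2 * s + 1), fact_cast_succ (m + 2 * s),
    fact_cast_succ (2 * d + 2 + m), e3, fact_cast_succ (2 * d + 1 + m),
    fact_cast_succ s, fact_cast_succ m]
  have hm : ((m !) : ℝ) ≠ 0 := by positivity
  have hs : ((s !) : ℝ) ≠ 0 := by positivity
  have hd : ((d : ℝ) + 1) ≠ 0 := by positivity
  field_simp
  push_cast
  ring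

lemma rec_lemma (N d : ℕ) : Ssum (N + 1) d = Ssum N (d + 1) / ((d : ℝ) + 1) := by
  set Hf : ℕ → ℝ := fun m =>
    (m : ℝ) * ((N : ℝ) - (m : ℝ) - (d : ℝ)) * 2 ^ m * ((2 * N + 1 - m)! : ℝ)
      * ((2 * d + 1 + m)! : ℝ) / (((d : ℝ) + 1) * ((m !) : ℝ) * (((N + 1 - m)!) : ℝ))
    with hHf
  have key : ∀ m ∈ Finset.range (N + 1),
      Tterm m (N + 1 - m) d - Tterm m (N - m) (d + 1) / ((d : ℝ) + 1)
        = Hf (m + 1) - Hf m := by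
    intro m hm
    rw [Finset.mem_range] at hm
    have hm' : m ≤ N := by omega
    have hs : N + 1 - m = (N - m) + 1 := by omega
    rw [hs, step_lemma m (N - m) d, hHf]
    have h1 : 2 * N + 1 - (m + 1) = m + 2 * (N - m) := by omega
    have h2 : 2 * N + 1 - m = m + 2 * (N - m) + 1 := by omega
    have h3 : N + 1 - (m + 1) = N - m := by omega
    have h4 : N + 1 - m = (N - m) + 1 := by omega
    have h5 : 2 * d + 1 + (m + 1) = 2 * d + 2 + m := by omega
    have hc : ((N - m : ℕ) : ℝ) = (N : ℝ) - (m : ℝ) := Nat.cast_sub hm'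
    simp only [h1, h2, h3, h4, h5, hc]
    push_cast
    ring
  have hsplit : Ssum (N + 1) d - Ssum N (d + 1) / ((d : ℝ) + 1)
      = (∑ m ∈ Finset.range (N + 1), (Hf (m + 1) - Hf m)) + Tterm (N + 1) 0 d := by
    unfold Ssum
    rw [Finset.sum_range_succ]
    have : (N + 1) - (N + 1) = 0 := by omega
    rw [this, Finset.sum_div, add_sub_right_comm, ← Finset.sum_sub_distrib,
      Finset.sum_congr rfl key]
  have htel : (∑ m ∈ Finset.range (N + 1), (Hf (m + 1) - Hf m)) = Hf (N + 1) - Hf 0 :=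
    Finset.sum_range_sub Hf (N + 1)
  have hHf0 : Hf 0 = 0 := by simp [hHf]
  have hHfN : Hf (N + 1) + Tterm (N + 1) 0 d = 0 := by
    rw [hHf]
    unfold Tterm
    have h1 : 2 * N + 1 - (N + 1) = N := by omega
    have h2 : N + 1 - (N + 1) = 0 := by omega
    have h3 : 2 * d + 1 + (N + 1) = 2 * d + 2 + N := by omega
    have h4 : (N + 1) + 2 * 0 = N + 1 := by omega
    simp only [h1, h2, h3, h4]
    have hfact : (((N + 1)!) : ℝ) = ((N : ℝ) + 1) * ((N !) : ℝ) := fact_cast_succ N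
    rw [hfact]
    have hN : ((N !) : ℝ) ≠ 0 := by positivity
    have hd : ((d : ℝ) + 1) ≠ 0 := by positivity
    rw [Nat.factorial_zero]
    push_cast
    field_simp
    ring
  have : Ssum (N + 1) d - Ssum N (d + 1) / ((d : ℝ) + 1) = 0 := by
    rw [hsplit, htel, hHf0]; linarith [hHfN]
  linarith [this]

lemma Ssum_closed (N : ℕ) : ∀ d : ℕ,
    Ssum N d = ((2 * d + 2 * N + 1)! : ℝ) * ((d !) : ℝ) / (((d + N)!) : ℝ) := by
  induction N with
  | zero =>
    intro d
    unfold Ssum Tterm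
    have hd : ((d !) : ℝ) ≠ 0 := by positivity
    simp [Nat.factorial]
    field_simp
  | succ n ih =>
    intro d
    rw [rec_lemma, ih (d + 1)]
    have h1 : 2 * (d + 1) + 2 * n + 1 = 2 * d + 2 * (n + 1) + 1 := by omega
    have h2 : d + 1 + n = d + (n + 1) := by omega
    rw [h1, h2, fact_cast_succ d]
    have hd : ((d : ℝ) + 1) ≠ 0 := by positivity
    have hdn : (((d + (n + 1))!) : ℝ) ≠ 0 := by positivity
    field_simp

/-- The distribution of `Y_i` (Theorem 2 of the paper): for `k ≥ 2`, with
`t_k = (2^(k+1)+(-1)^k)/3` and `t_{k-1} = (2^k+(-1)^(k-1))/3`, and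
`1 ≤ i ≤ t_k - t_{k-1}`, the probabilities `P(Y_i = j)` for
`2t_{k-1}+i-1 ≤ j ≤ 2^k-1` sum to `1`. -/
theorem mergeInsertion_Yi_dist_sums_to_one (k : ℕ) (hk : 2 ≤ k) (tk tk1 : ℕ)
    (htk : (3 : ℤ) * tk = 2 ^ (k + 1) + (-1) ^ k)
    (htk1 : (3 : ℤ) * tk1 = 2 ^ k + (-1) ^ (k - 1))
    (i : ℕ) (hi₁ : 1 ≤ i) (hi₂ : i ≤ tk - tk1) :
    ∑ j ∈ Finset.Icc (2 * tk1 + i - 1) (2 ^ k - 1),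
        (2 : ℝ) ^ (j + 1 - 2 * tk1 - i) *
          ((2 * tk - i - j - 1)! : ℝ) /
            (((j + 1 - 2 * tk1 - i)! : ℝ) * ((2 ^ k - j - 1)! : ℝ)) *
          ((i + j)! : ℝ) / ((2 * tk - 1)! : ℝ) *
          ((tk - 1)! : ℝ) / ((tk1 + i - 1)! : ℝ) = 1 := by
  -- basic arithmetic facts
  obtain ⟨k', rfl⟩ : ∃ k', k = k' + 1 := ⟨k - 1, by omega⟩
  have hk' : 1 ≤ k' := by omega
  have hpow : (-1 : ℤ) ^ (k' + 1) = -(-1 : ℤ) ^ k' := by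
    rw [pow_succ]; ring
  have hkk : k' + 1 - 1 = k' := by omega
  rw [hkk] at htk1
  have hsumZ : (tk : ℤ) + tk1 = 2 ^ (k' + 1) := by
    have h3 : (3 : ℤ) * ((tk : ℤ) + tk1) = 3 * 2 ^ (k' + 1) := by
      rw [mul_add, htk, htk1, hpow]; ring
    linarith
  have hsum : tk + tk1 = 2 ^ (k' + 1) := by exact_mod_cast hsumZ
  have htk1pos : 1 ≤ tk1 := by
    have h4 : (4 : ℤ) ≤ 2 ^ (k' + 1) := by
      calc (4 : ℤ) = 2 ^ 2 := by norm_num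
      _ ≤ 2 ^ (k' + 1) := by
        apply pow_le_pow_right₀ (by norm_num) (by omega)
    have hneg : (-1 : ℤ) ^ k' = 1 ∨ (-1 : ℤ) ^ k' = -1 := neg_one_pow_eq_or ℤ k'
    have : (3 : ℤ) ≤ 3 * tk1 := by rcases hneg with h | h <;> rw [htk1, h] <;> linarith
    have : (1 : ℤ) ≤ tk1 := by linarith
    exact_mod_cast this
  have htkgt : tk1 + i ≤ tk := by omega
  -- abbreviations
  set d := tk1 + i - 1 with hd
  set N := tk - tk1 - i with hN
  -- rewrite 2^k as tk + tk1
  rw [← hsum]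
  have hub : tk + tk1 - 1 + 1 - (2 * tk1 + i - 1) = N + 1 := by omega
  rw [← Finset.Ico_add_one_right_eq_Icc, Finset.sum_Ico_eq_sum_range, hub]
  have congrterms : ∀ m ∈ Finset.range (N + 1),
      (2 : ℝ) ^ (2 * tk1 + i - 1 + m + 1 - 2 * tk1 - i) *
          ((2 * tk - i - (2 * tk1 + i - 1 + m) - 1)! : ℝ) /
            (((2 * tk1 + i - 1 + m + 1 - 2 * tk1 - i)! : ℝ) *
              (((tk + tk1) - (2 * tk1 + i - 1 + m) - 1)! : ℝ)) *
          ((i + (2 * tk1 + i - 1 + m))! : ℝ) / ((2 * tk - 1)! : ℝ) *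
          ((tk - 1)! : ℝ) / ((tk1 + i - 1)! : ℝ)
        = Tterm m (N - m) d
            * (((d + N)! : ℝ) / (((2 * d + 2 * N + 1)! : ℝ) * ((d !) : ℝ))) := by
    intro m hm
    rw [Finset.mem_range] at hm
    have h1 : 2 * tk1 + i - 1 + m + 1 - 2 * tk1 - i = m := by omega
    have h2 : 2 * tk - i - (2 * tk1 + i - 1 + m) - 1 = m + 2 * (N - m) := by omega
    have h3 : (tk + tk1) - (2 * tk1 + i - 1 + m) - 1 = N - m := by omega
    have h4 : i + (2 * tk1 + i - 1 + m) = 2 * d + 1 + m := by omega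
    have h5 : 2 * tk - 1 = 2 * d + 2 * N + 1 := by omega
    have h6 : tk - 1 = d + N := by omega
    have h7 : tk1 + i - 1 = d := by omega
    rw [h1, h2, h3, h4, h5, h6, h7]
    unfold Tterm
    ring
  rw [Finset.sum_congr rfl congrterms, ← Finset.sum_mul]
  have : (∑ m ∈ Finset.range (N + 1), Tterm m (N - m) d) = Ssum N d := rfl
  rw [this, Ssum_closed N d]
  have h1 : (((2 * d + 2 * N + 1)!) : ℝ) ≠ 0 := by positivity
  have h2 : ((d !) : ℝ) ≠ 0 := by positivity
  have h3 : (((d + N)!) : ℝ) ≠ 0 := by positivity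
  field_simp
end
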